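/- arXiv:1907.09150 — 2 statements merged into one kernel-verified Lean document; each statement's English description precedes it below -/
import Mathlib

section
/- Let P(x) = f(x) + g(x) on ℝ^d, where f is linear (f(x) = ⟨c, x⟩ for some c) and g is μ_g-strongly convex. Fix α > 0, a vector v ∈ ℝ^d, and points x, y ∈ ℝ^d, and let x⁺ = argmin_w { g(w) + (1/(2α))‖w − x + αv‖² }. Then P(y) ≥ P(x⁺) + (1/α)⟨x − x⁺, y − x⟩ + ⟨v − c, x⁺ − y⟩ + (1/α)‖x − x⁺‖² + (μ_g/2)‖y − x⁺‖². -/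
private lemma quad_comb {d : ℕ} (u w : EuclideanSpace ℝ (Fin d)) (t : ℝ) :
    ‖(1 - t) • u + t • w‖ ^ 2
      = (1 - t) * ‖u‖ ^ 2 + t * ‖w‖ ^ 2 - (1 - t) * t * ‖u - w‖ ^ 2 := by
  simp only [← real_inner_self_eq_norm_sq, inner_add_left, inner_add_right,
    inner_sub_left, inner_sub_right, real_inner_smul_left, real_inner_smul_right,
    real_inner_comm w u]
  ring

/-- Lemma 1 (adjusted Lemma 3 of Xiao–Zhang): for `P = f + g` with `f` linear
(`f x = ⟪c, x⟫`) and `g` `μg`-strongly convex, `α > 0`, and `x⁺` the proximal point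
`prox_{αg}(x − αv)`, one has the stated lower bound on `P y`. -/
theorem prox_linear_strongly_convex_bound {d : ℕ}
    (c : EuclideanSpace ℝ (Fin d)) (g : EuclideanSpace ℝ (Fin d) → ℝ)
    (μg : ℝ) (hμg : 0 ≤ μg)
    (hg : StrongConvexOn Set.univ μg g)
    (α : ℝ) (hα : 0 < α)
    (v x y xp : EuclideanSpace ℝ (Fin d))
    (hxp : ∀ w : EuclideanSpace ℝ (Fin d),
      g xp + 1 / (2 * α) * ‖xp - (x - α • v)‖ ^ 2
        ≤ g w + 1 / (2 * α) * ‖w - (x - α • v)‖ ^ 2) :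
    ((inner ℝ c y : ℝ) + g y)
      ≥ ((inner ℝ c xp : ℝ) + g xp)
        + (1 / α) * (inner ℝ (x - xp) (y - x) : ℝ)
        + (inner ℝ (v - c) (xp - y) : ℝ)
        + (1 / α) * ‖x - xp‖ ^ 2
        + μg / 2 * ‖y - xp‖ ^ 2 := by
  set z : EuclideanSpace ℝ (Fin d) := x - α • v with hz
  set A : ℝ := g xp + 1 / (2 * α) * ‖xp - z‖ ^ 2 with hA
  set B : ℝ := g y + 1 / (2 * α) * ‖y - z‖ ^ 2 with hB
  set K : ℝ := (μg / 2 + 1 / (2 * α)) * ‖xp - y‖ ^ 2 with hK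
  have hK0 : 0 ≤ K := by
    apply mul_nonneg
    · have : 0 < 1 / (2 * α) := by positivity
      linarith
    · positivity
  clear_value z A B K
  have hstep : ∀ t : ℝ, 0 < t → t < 1 → A ≤ B - (1 - t) * K := by
    intro t ht0 ht1
    set w : EuclideanSpace ℝ (Fin d) := (1 - t) • xp + t • y with hw
    have hgw : g w ≤ (1 - t) * g xp + t * g y
        - (1 - t) * t * (μg / 2 * ‖xp - y‖ ^ 2) := by
      have h0 := hg.2 (Set.mem_univ xp) (Set.mem_univ y)
        (show (0:ℝ) ≤ 1 - t by linarith) ht0.le (show (1 - t) + t = 1 by ring)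
      simpa [smul_eq_mul] using h0
    have hwz : w - z = (1 - t) • (xp - z) + t • (y - z) := by
      rw [hw]; module
    have hq : ‖w - z‖ ^ 2 = (1 - t) * ‖xp - z‖ ^ 2 + t * ‖y - z‖ ^ 2
        - (1 - t) * t * ‖xp - y‖ ^ 2 := by
      rw [hwz, quad_comb]
      have : xp - z - (y - z) = xp - y := by abel
      rw [this]
    have h1 := hxp w
    rw [hA] at h1
    have h2α : 0 < 1 / (2 * α) := by positivity
    have hcomb : A ≤ (1 - t) * A + t * B - t * (1 - t) * K := by
      rw [hA, hB, hK]
      calc g xp + 1 / (2 * α) * ‖xp - z‖ ^ 2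
          ≤ g w + 1 / (2 * α) * ‖w - z‖ ^ 2 := h1
        _ ≤ ((1 - t) * g xp + t * g y - (1 - t) * t * (μg / 2 * ‖xp - y‖ ^ 2))
            + 1 / (2 * α) * ‖w - z‖ ^ 2 := by linarith
        _ = (1 - t) * (g xp + 1 / (2 * α) * ‖xp - z‖ ^ 2)
            + t * (g y + 1 / (2 * α) * ‖y - z‖ ^ 2)
            - t * (1 - t) * ((μg / 2 + 1 / (2 * α)) * ‖xp - y‖ ^ 2) := by
            rw [hq]; ring
    have : t * (A + (1 - t) * K) ≤ t * B := by nlinarith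
    have := (mul_le_mul_iff_right₀ ht0).mp this
    linarith
  have key : A + K ≤ B := by
    by_contra h
    push_neg at h
    rcases eq_or_lt_of_le hK0 with hKz | hKpos
    · have := hstep (1/2) (by norm_num) (by norm_num)
      rw [← hKz] at this h
      norm_num at this h
      linarith
    · obtain ⟨t, ht0, ht1, htK⟩ :
          ∃ t : ℝ, 0 < t ∧ t < 1 ∧ t * K ≤ (A + K - B) / 2 := by
        refine ⟨min (1/2) ((A + K - B) / (2 * K)),
          lt_min (by norm_num) (div_pos (by linarith) (by linarith)),
          lt_of_le_of_lt (min_le_left _ _) (by norm_num), ?_⟩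
        have hm : min (1/2) ((A + K - B) / (2 * K)) ≤ (A + K - B) / (2 * K) :=
          min_le_right _ _
        calc min (1/2) ((A + K - B) / (2 * K)) * K
            ≤ (A + K - B) / (2 * K) * K :=
              mul_le_mul_of_nonneg_right hm (le_of_lt hKpos)
          _ = (A + K - B) / 2 := by field_simp
      have hs := hstep t ht0 ht1
      have hs' : A ≤ B - K + t * K := by
        have hexp : (1 - t) * K = K - t * K := by ring
        linarith [hs, hexp]
      linarith
  -- Now the algebraic identity.
  have hαne : α ≠ 0 := ne_of_gt hα
  have id3 : (inner ℝ c y : ℝ)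
      + (1 / (2 * α) * ‖xp - z‖ ^ 2 - 1 / (2 * α) * ‖y - z‖ ^ 2 + K)
      = (inner ℝ c xp : ℝ)
        + ((1 / α) * (inner ℝ (x - xp) (y - x) : ℝ)
          + (inner ℝ (v - c) (xp - y) : ℝ)
          + (1 / α) * ‖x - xp‖ ^ 2
          + μg / 2 * ‖y - xp‖ ^ 2) := by
    rw [hK, hz]
    simp only [← real_inner_self_eq_norm_sq, inner_sub_left, inner_sub_right,
      real_inner_smul_left, real_inner_smul_right,
      real_inner_comm xp x, real_inner_comm y x, real_inner_comm v x,
      real_inner_comm y xp, real_inner_comm v xp, real_inner_comm v y,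
      real_inner_comm c x, real_inner_comm c xp, real_inner_comm c y, real_inner_comm c v]
    field_simp
    ring
  rw [hA, hB] at key
  linarith [key, id3]
end

section
/- Let f_0, …, f_{n−1} : ℝ^d → ℝ^ℓ each be B_f-Lipschitz, and set f̄(θ) = (1/n)∑_{j} f_j(θ). If J is a uniformly random index in {0,…,n−1}, then for any θ, θ̃ ∈ ℝ^d the SVRG correction term satisfies E‖f_J(θ) − f_J(θ̃) + f̄(θ̃) − f̄(θ)‖² ≤ 2 B_f² (1 − 1/n) ‖θ − θ̃‖². -/
open Finset

/-- Variance bound for the SVRG correction term: if each `f j` is `B_f`-Lipschitz and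
`f̄` is their average, then for uniformly random `J`,
`E‖f_J(θ) − f_J(θ̃) + f̄(θ̃) − f̄(θ)‖² ≤ 2 B_f² (1 − 1/n) ‖θ − θ̃‖²`. -/
theorem svrg_correction_variance_bound {d l n : ℕ} (hn : 0 < n)
    (f : Fin n → EuclideanSpace ℝ (Fin d) → EuclideanSpace ℝ (Fin l))
    (Bf : ℝ)
    (hLip : ∀ (j : Fin n) (θ₁ θ₂ : EuclideanSpace ℝ (Fin d)),
      ‖f j θ₁ - f j θ₂‖ ≤ Bf * ‖θ₁ - θ₂‖)
    (θ θt : EuclideanSpace ℝ (Fin d)) :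
    (n : ℝ)⁻¹ * ∑ j : Fin n,
        ‖f j θ - f j θt + (n : ℝ)⁻¹ • ∑ i : Fin n, f i θt
          - (n : ℝ)⁻¹ • ∑ i : Fin n, f i θ‖ ^ 2
      ≤ 2 * Bf ^ 2 * (1 - (n : ℝ)⁻¹) * ‖θ - θt‖ ^ 2 := by
  have hn' : (0:ℝ) < n := by exact_mod_cast hn
  set g : Fin n → EuclideanSpace ℝ (Fin l) := fun j => f j θ - f j θt with hg
  set G : EuclideanSpace ℝ (Fin l) := ∑ i, g i with hG
  have key : ∀ j : Fin n,
      f j θ - f j θt + (n : ℝ)⁻¹ • ∑ i : Fin n, f i θt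
        - (n : ℝ)⁻¹ • ∑ i : Fin n, f i θ = g j - (n : ℝ)⁻¹ • G := by
    intro j
    simp only [hg, hG, Finset.sum_sub_distrib, smul_sub]
    abel
  -- inner product expansion
  have ident : ∑ j : Fin n, ‖g j - (n:ℝ)⁻¹ • G‖ ^ 2
      = (∑ j, ‖g j‖^2) - (n:ℝ)⁻¹ * ‖G‖^2 := by
    have h1 : ∀ j : Fin n, ‖g j - (n:ℝ)⁻¹ • G‖ ^ 2
        = ‖g j‖^2 - 2 * ((n:ℝ)⁻¹ * inner ℝ (g j) G) + (n:ℝ)⁻¹^2 * ‖G‖^2 := by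
      intro j
      rw [norm_sub_sq_real, real_inner_smul_right, norm_smul]
      simp [mul_pow, abs_of_pos (inv_pos.mpr hn')]
    have hsG : ∑ i : Fin n, (inner ℝ (g i) G : ℝ) = ‖G‖^2 := by
      rw [← sum_inner, ← hG, real_inner_self_eq_norm_sq]
    rw [Finset.sum_congr rfl (fun j _ => h1 j)]
    rw [Finset.sum_add_distrib, Finset.sum_sub_distrib]
    simp_rw [← Finset.mul_sum]
    rw [hsG]
    simp only [Finset.sum_const, Finset.card_univ, Fintype.card_fin, nsmul_eq_mul]
    field_simp
    ring
  have ident2 : ∑ i : Fin n, ∑ j : Fin n, ‖g i - g j‖^2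
      = 2 * (n:ℝ) * (∑ j, ‖g j‖^2) - 2 * ‖G‖^2 := by
    have h1 : ∀ i j : Fin n, ‖g i - g j‖^2
        = ‖g i‖^2 + ‖g j‖^2 - 2 * inner ℝ (g i) (g j) := by
      intro i j
      rw [norm_sub_sq_real]; ring
    have hGG : ∑ i : Fin n, ∑ j : Fin n, (inner ℝ (g i) (g j) : ℝ) = ‖G‖^2 := by
      simp_rw [← inner_sum]
      rw [← sum_inner, ← hG, real_inner_self_eq_norm_sq]
    simp only [h1, Finset.sum_add_distrib, Finset.sum_sub_distrib, Finset.sum_const,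
      Finset.card_univ, Fintype.card_fin, nsmul_eq_mul, ← Finset.mul_sum]
    rw [hGG]
    ring
  -- bound each term of double sum
  set r := ‖θ - θt‖ with hr
  have hgj : ∀ j : Fin n, ‖g j‖ ≤ Bf * r := fun j => hLip j θ θt
  have hBr : 0 ≤ Bf * r := le_trans (norm_nonneg _) (hgj ⟨0, hn⟩)
  have hpair : ∀ i j : Fin n, ‖g i - g j‖^2 ≤ 4 * (Bf * r)^2 := by
    intro i j
    have h := norm_sub_le (g i) (g j)
    have : ‖g i - g j‖ ≤ 2 * (Bf * r) := by
      calc ‖g i - g j‖ ≤ ‖g i‖ + ‖g j‖ := norm_sub_le _ _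
        _ ≤ Bf * r + Bf * r := add_le_add (hgj i) (hgj j)
        _ = 2 * (Bf * r) := by ring
    nlinarith [norm_nonneg (g i - g j)]
  have hdouble : ∑ i : Fin n, ∑ j : Fin n, ‖g i - g j‖^2
      ≤ (n:ℝ) * ((n:ℝ) - 1) * (4 * (Bf * r)^2) := by
    have hrow : ∀ i : Fin n, ∑ j : Fin n, ‖g i - g j‖^2
        ≤ ((n:ℝ) - 1) * (4 * (Bf * r)^2) := by
      intro i
      have : ∑ j : Fin n, ‖g i - g j‖^2 = ∑ j ∈ univ \ {i}, ‖g i - g j‖^2 := by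
        rw [Finset.sum_sdiff_eq_sub (Finset.subset_univ _)]
        simp
      rw [this]
      calc ∑ j ∈ univ \ {i}, ‖g i - g j‖^2
          ≤ ∑ j ∈ univ \ {i}, 4 * (Bf * r)^2 :=
            Finset.sum_le_sum (fun j _ => hpair i j)
        _ = ((n:ℝ) - 1) * (4 * (Bf * r)^2) := by
            rw [Finset.sum_const, Finset.card_sdiff_of_subset (by simp)]
            simp [Finset.card_univ, nsmul_eq_mul]
            left
            push_cast [Nat.cast_sub hn]
            ring
    calc ∑ i : Fin n, ∑ j : Fin n, ‖g i - g j‖^2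
        ≤ ∑ _i : Fin n, ((n:ℝ) - 1) * (4 * (Bf * r)^2) :=
          Finset.sum_le_sum (fun i _ => hrow i)
      _ = (n:ℝ) * (((n:ℝ) - 1) * (4 * (Bf * r)^2)) := by
          simp [Finset.sum_const, Finset.card_univ]
      _ = (n:ℝ) * ((n:ℝ) - 1) * (4 * (Bf * r)^2) := by ring
  -- combine
  have lhs_eq : (n : ℝ)⁻¹ * ∑ j : Fin n,
        ‖f j θ - f j θt + (n : ℝ)⁻¹ • ∑ i : Fin n, f i θt
          - (n : ℝ)⁻¹ • ∑ i : Fin n, f i θ‖ ^ 2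
      = (2 * (n:ℝ)^2)⁻¹ * ∑ i : Fin n, ∑ j : Fin n, ‖g i - g j‖^2 := by
    rw [Finset.sum_congr rfl (fun j _ => by rw [key j]), ident, ident2]
    field_simp
  rw [lhs_eq]
  have h2 : (2 * (n:ℝ)^2)⁻¹ * ∑ i : Fin n, ∑ j : Fin n, ‖g i - g j‖^2
      ≤ (2 * (n:ℝ)^2)⁻¹ * ((n:ℝ) * ((n:ℝ) - 1) * (4 * (Bf * r)^2)) := by
    apply mul_le_mul_of_nonneg_left hdouble
    positivity
  refine h2.trans (le_of_eq ?_)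
  field_simp
  ring
end
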